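/- arXiv:1710.05110 — 5 statements merged into one kernel-verified Lean document; each statement's English description precedes it below -/
import Mathlib

section
/- Let X ∈ R^{d×n}, λ > 0, S ⊆ {1..n} of size s, and define h_i = 1 − x_i^T (X_S X_S^T + λI)^{-1} x_i for i ∈ S. Then the sum M = Σ_{i∈S} h_i equals s − d + λ·tr((X_S X_S^T + λI)^{-1}), and consequently M ≥ s − d_λ where d_λ = tr(X^T (X X^T + λI)^{-1} X) is the statistical dimension of the full matrix X. -/
open Matrix

/-- The regularized Gram matrix `X_S X_Sᵀ + λ I = ∑_{i∈S} x_i x_iᵀ + λ I`. -/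
noncomputable def regGram {d n : ℕ} (X : Matrix (Fin d) (Fin n) ℝ) (lam : ℝ)
    (S : Finset (Fin n)) : Matrix (Fin d) (Fin d) ℝ :=
  ∑ i ∈ S, Matrix.vecMulVec (fun k => X k i) (fun k => X k i) + lam • 1

/-- The statistical dimension `d_λ = tr(Xᵀ (X Xᵀ + λI)⁻¹ X)`. -/
noncomputable def statDim {d n : ℕ} (X : Matrix (Fin d) (Fin n) ℝ) (lam : ℝ) : ℝ :=
  (Xᵀ * (X * Xᵀ + lam • 1)⁻¹ * X).trace

private lemma psd_vmv {d : ℕ} (x : Fin d → ℝ) : (vecMulVec x x).PosSemidef := by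
  refine Matrix.PosSemidef.of_dotProduct_mulVec_nonneg ?_ ?_
  · ext i j
    simp [vecMulVec_apply, conjTranspose_apply, mul_comm]
  · intro y
    have h1 : (vecMulVec x x) *ᵥ y = (x ⬝ᵥ y) • x := by
      ext k
      simp only [mulVec, dotProduct, vecMulVec_apply, Pi.smul_apply, smul_eq_mul,
        Finset.sum_mul]
      exact Finset.sum_congr rfl fun j _ => by ring
    rw [h1]
    simp only [star_trivial, dotProduct_smul, smul_eq_mul]
    rw [dotProduct_comm]
    exact mul_self_nonneg _

private lemma psd_sum {d : ℕ} {ι : Type*} (T : Finset ι) (f : ι → Matrix (Fin d) (Fin d) ℝ)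
    (hf : ∀ i ∈ T, (f i).PosSemidef) : (∑ i ∈ T, f i).PosSemidef := by
  classical
  induction T using Finset.induction_on with
  | empty => simpa using Matrix.PosSemidef.zero
  | insert _ _ hx ih =>
    rw [Finset.sum_insert hx]
    exact ((hf _ (Finset.mem_insert_self _ _)).add
      (ih fun i hi => hf i (Finset.mem_insert_of_mem hi)))

private lemma posdef_smul_one {d : ℕ} {lam : ℝ} (hlam : 0 < lam) :
    (lam • (1 : Matrix (Fin d) (Fin d) ℝ)).PosDef := by
  rw [Matrix.smul_one_eq_diagonal]
  exact Matrix.posDef_diagonal_iff.mpr fun _ => hlam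

/-- `vᵀ M v = tr (M * v vᵀ)`. -/
private lemma dot_eq_trace {d : ℕ} (M : Matrix (Fin d) (Fin d) ℝ) (v : Fin d → ℝ) :
    v ⬝ᵥ M *ᵥ v = (M * vecMulVec v v).trace := by
  simp only [trace, diag_apply, mul_apply, vecMulVec_apply, dotProduct, mulVec,
    Finset.mul_sum]
  exact Finset.sum_congr rfl fun k _ => Finset.sum_congr rfl fun j _ => by ring

private lemma sym_of_posdef {d : ℕ} {A : Matrix (Fin d) (Fin d) ℝ} (hA : A.PosDef) :
    Aᵀ = A := by
  have := hA.isHermitian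
  rwa [Matrix.IsHermitian, conjTranspose_eq_transpose_of_trivial] at this

/-- quadratic-form monotonicity of inverses -/
private lemma inv_quad_le {d : ℕ} {A B : Matrix (Fin d) (Fin d) ℝ}
    (hA : A.PosDef) (hB : B.PosDef) (hAB : (B - A).PosSemidef) (v : Fin d → ℝ) :
    v ⬝ᵥ B⁻¹ *ᵥ v ≤ v ⬝ᵥ A⁻¹ *ᵥ v := by
  have hAd : IsUnit A.det := hA.det_pos.ne'.isUnit
  have hBd : IsUnit B.det := hB.det_pos.ne'.isUnit
  have hAsym := sym_of_posdef hA
  set u : Fin d → ℝ := B⁻¹ *ᵥ v with hu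
  have hBu : B *ᵥ u = v := by
    rw [hu, mulVec_mulVec, Matrix.mul_nonsing_inv _ hBd, one_mulVec]
  set a : ℝ := u ⬝ᵥ A *ᵥ u with ha
  set b : ℝ := u ⬝ᵥ v with hb
  set c : ℝ := v ⬝ᵥ A⁻¹ *ᵥ v with hc
  have hgoalL : v ⬝ᵥ B⁻¹ *ᵥ v = b := by rw [hb, hu, dotProduct_comm]
  rw [hgoalL]
  have hab : a ≤ b := by
    have := hAB.dotProduct_mulVec_nonneg u
    simp only [star_trivial, sub_mulVec, dotProduct_sub, hBu] at this
    linarith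
  by_cases hu0 : u = 0
  · have hv0 : v = 0 := by rw [← hBu, hu0, mulVec_zero]
    simp [hb, hc, hv0]
  · have ha_pos : 0 < a := by
      have := hA.dotProduct_mulVec_pos (x := u) (by simpa using hu0)
      simpa using this
    -- symmetric dot product helper
    have hsymdot : ∀ z : Fin d → ℝ, (A *ᵥ u) ⬝ᵥ z = u ⬝ᵥ A *ᵥ z := by
      intro z
      rw [dotProduct_comm, dotProduct_mulVec, ← mulVec_transpose, hAsym, dotProduct_comm,
        dotProduct_mulVec, ← mulVec_transpose, hAsym]
    have hAinvA : ∀ z : Fin d → ℝ, A⁻¹ *ᵥ (A *ᵥ z) = z := by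
      intro z
      rw [mulVec_mulVec, Matrix.nonsing_inv_mul _ hAd, one_mulVec]
    have hAinvsym : (A⁻¹)ᵀ = A⁻¹ := sym_of_posdef hA.inv
    have key : ∀ t : ℝ, 0 ≤ c - 2 * t * b + t ^ 2 * a := by
      intro t
      have h0 := hA.inv.posSemidef.dotProduct_mulVec_nonneg (v - t • (A *ᵥ u))
      simp only [star_trivial, mulVec_sub, mulVec_smul, dotProduct_sub, sub_dotProduct,
        smul_dotProduct, dotProduct_smul, smul_eq_mul, hAinvA] at h0
      have e1 : v ⬝ᵥ u = b := by rw [dotProduct_comm]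
      have e2 : (A *ᵥ u) ⬝ᵥ A⁻¹ *ᵥ v = b := by
        simp only [hsymdot, mulVec_mulVec, Matrix.mul_nonsing_inv _ hAd, one_mulVec, hb]
      have e3 : (A *ᵥ u) ⬝ᵥ u = a := by rw [hsymdot]
      rw [e1, e2, e3, ← hc] at h0
      nlinarith [h0]
    have hkey := key (b / a)
    have hbb : b ^ 2 ≤ a * c := by
      have h7 : 0 ≤ a * (c - 2 * (b / a) * b + (b / a) ^ 2 * a) :=
        mul_nonneg ha_pos.le hkey
      have h8 : a * (c - 2 * (b / a) * b + (b / a) ^ 2 * a) = a * c - b ^ 2 := by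
        field_simp
        ring
      rw [h8] at h7
      linarith
    nlinarith [hab, ha_pos, hbb]

private lemma trace_inv_le {d : ℕ} {A B : Matrix (Fin d) (Fin d) ℝ}
    (hA : A.PosDef) (hB : B.PosDef) (hAB : (B - A).PosSemidef) :
    (B⁻¹).trace ≤ (A⁻¹).trace := by
  have h : ∀ (M : Matrix (Fin d) (Fin d) ℝ) (k : Fin d),
      M k k = Pi.single k (1:ℝ) ⬝ᵥ M *ᵥ Pi.single k (1:ℝ) := by
    intro M k
    simp [mulVec_single, single_dotProduct]
  rw [Matrix.trace, Matrix.trace]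
  refine Finset.sum_le_sum fun k _ => ?_
  rw [diag_apply, diag_apply, h B⁻¹ k, h A⁻¹ k]
  exact inv_quad_le hA hB hAB _

/-- `M = ∑_{i∈S} h_i = s − d + λ·tr((X_S X_Sᵀ + λI)⁻¹)`, and consequently `M ≥ s − d_λ`. -/
theorem sum_h_eq_and_ge
    (d n : ℕ) (X : Matrix (Fin d) (Fin n) ℝ) (lam : ℝ) (hlam : 0 < lam)
    (S : Finset (Fin n)) :
    (∑ i ∈ S, (1 - (fun k => X k i) ⬝ᵥ (regGram X lam S)⁻¹ *ᵥ (fun k => X k i)))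
        = (S.card : ℝ) - d + lam * ((regGram X lam S)⁻¹).trace
    ∧ (S.card : ℝ) - statDim X lam
        ≤ ∑ i ∈ S, (1 - (fun k => X k i) ⬝ᵥ (regGram X lam S)⁻¹ *ᵥ (fun k => X k i)) := by
  classical
  set P : Matrix (Fin d) (Fin d) ℝ :=
    ∑ i ∈ S, vecMulVec (fun k => X k i) (fun k => X k i) with hP
  set A : Matrix (Fin d) (Fin d) ℝ := regGram X lam S with hAdef
  set B : Matrix (Fin d) (Fin d) ℝ := X * Xᵀ + lam • 1 with hBdef
  have hAP : A = P + lam • 1 := rfl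
  have hPpsd : P.PosSemidef := psd_sum _ _ fun i _ => psd_vmv _
  have hA : A.PosDef := by
    rw [hAP]; exact Matrix.PosDef.posSemidef_add hPpsd (posdef_smul_one hlam)
  have hXXT : X * Xᵀ = ∑ i : Fin n, vecMulVec (fun k => X k i) (fun k => X k i) := by
    ext k l
    simp [mul_apply, vecMulVec_apply, Matrix.sum_apply, transpose_apply]
  have hB : B.PosDef := by
    rw [hBdef, hXXT]
    exact Matrix.PosDef.posSemidef_add (psd_sum _ _ fun i _ => psd_vmv _)
      (posdef_smul_one hlam)
  have hBA : (B - A).PosSemidef := by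
    have : B - A = ∑ i ∈ Finset.univ \ S, vecMulVec (fun k => X k i) (fun k => X k i) := by
      rw [hBdef, hAP, hXXT, hP, ← Finset.sum_sdiff (Finset.subset_univ S)]
      abel
    rw [this]
    exact psd_sum _ _ fun i _ => psd_vmv _
  have hAd : IsUnit A.det := hA.det_pos.ne'.isUnit
  have hBd : IsUnit B.det := hB.det_pos.ne'.isUnit
  -- the key trace computation for A
  have hsum : ∑ i ∈ S, ((fun k => X k i) ⬝ᵥ A⁻¹ *ᵥ (fun k => X k i))
      = (d : ℝ) - lam * (A⁻¹).trace := by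
    have step1 : ∑ i ∈ S, ((fun k => X k i) ⬝ᵥ A⁻¹ *ᵥ (fun k => X k i))
        = (A⁻¹ * P).trace := by
      rw [hP, Matrix.mul_sum, trace_sum]
      exact Finset.sum_congr rfl fun i _ => dot_eq_trace _ _
    have step2 : A⁻¹ * P = 1 - lam • A⁻¹ := by
      have : P = A - lam • 1 := by rw [hAP]; abel
      rw [this, Matrix.mul_sub, Matrix.nonsing_inv_mul _ hAd, Matrix.mul_smul, Matrix.mul_one]
    rw [step1, step2, trace_sub, trace_smul, trace_one]
    simp
  have hfirst : (∑ i ∈ S, (1 - (fun k => X k i) ⬝ᵥ A⁻¹ *ᵥ (fun k => X k i)))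
      = (S.card : ℝ) - d + lam * (A⁻¹).trace := by
    rw [Finset.sum_sub_distrib, hsum, Finset.sum_const, nsmul_eq_mul, mul_one]
    ring
  refine ⟨hfirst, ?_⟩
  rw [hfirst]
  have hstat : statDim X lam = (d : ℝ) - lam * (B⁻¹).trace := by
    have hXX : X * Xᵀ = B - lam • 1 := by rw [hBdef]; abel
    rw [statDim, ← hBdef, trace_mul_cycle, hXX, Matrix.sub_mul,
      Matrix.mul_nonsing_inv _ hBd, Matrix.smul_mul, Matrix.one_mul, trace_sub, trace_smul,
      trace_one]
    simp
  rw [hstat]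
  have hle : (B⁻¹).trace ≤ (A⁻¹).trace := trace_inv_le hA hB hBA
  have := mul_le_mul_of_nonneg_left hle hlam.le
  linarith
end

section
/- Let X ∈ R^{d×n}, λ > 0, S ⊆ {1..n}, and for i ∈ S let h_i(S) = 1 − x_i^T (X_S X_S^T + λI)^{-1} x_i. Writing Z_S = (X_S X_S^T + λI)^{-1}, the weighted sum Σ_{i∈S} h_i(S) · Z_{S−i} equals M·Z_S + Z_S − λ·Z_S², where M = Σ_{i∈S} h_i(S), and hence Σ_{i∈S} h_i(S) · Z_{S−i} ⪯ (M+1)·Z_S in the Loewner order. -/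
open Matrix

/-- `Z_S = (X_S X_Sᵀ + λ I)⁻¹`. -/
noncomputable def regInv {d n : ℕ} (X : Matrix (Fin d) (Fin n) ℝ) (lam : ℝ)
    (S : Finset (Fin n)) : Matrix (Fin d) (Fin d) ℝ :=
  (regGram X lam S)⁻¹

/-- `h_i(S) = 1 − x_iᵀ Z_S x_i`. -/
noncomputable def hWeight {d n : ℕ} (X : Matrix (Fin d) (Fin n) ℝ) (lam : ℝ)
    (S : Finset (Fin n)) (i : Fin n) : ℝ :=
  1 - (fun k => X k i) ⬝ᵥ regInv X lam S *ᵥ (fun k => X k i)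

lemma psd_vecMulVec {m : ℕ} (u : Fin m → ℝ) : (vecMulVec u u).PosSemidef := by
  rw [vecMulVec_eq (Fin 1)]
  have := posSemidef_conjTranspose_mul_self (replicateRow (Fin 1) u)
  rwa [conjTranspose_replicateRow, star_trivial] at this

lemma posDef_smul_one {m : ℕ} {c : ℝ} (hc : 0 < c) :
    (c • (1 : Matrix (Fin m) (Fin m) ℝ)).PosDef := by
  have h : c • (1 : Matrix (Fin m) (Fin m) ℝ) = diagonal (fun _ => c) := by
    ext i j; by_cases hij : i = j <;> simp [Matrix.diagonal, Matrix.one_apply, hij]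
  rw [h]
  exact Matrix.PosDef.diagonal (fun _ => hc)

lemma gram_posDef {d n : ℕ} (X : Matrix (Fin d) (Fin n) ℝ) {lam : ℝ} (hlam : 0 < lam)
    (S : Finset (Fin n)) : (regGram X lam S).PosDef := by
  refine Matrix.PosDef.posSemidef_add ?_ (posDef_smul_one hlam)
  exact Finset.sum_induction _ _ (fun a b ha hb => ha.add hb) Matrix.PosSemidef.zero
    (fun i _ => psd_vecMulVec _)

lemma gram_erase {d n : ℕ} (X : Matrix (Fin d) (Fin n) ℝ) (lam : ℝ)
    {S : Finset (Fin n)} {i : Fin n} (hi : i ∈ S) :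
    regGram X lam (S.erase i)
      = regGram X lam S - vecMulVec (fun k => X k i) (fun k => X k i) := by
  unfold regGram
  rw [← Finset.add_sum_erase _ _ hi]
  abel

lemma gram_mul_inv {d n : ℕ} (X : Matrix (Fin d) (Fin n) ℝ) {lam : ℝ} (hlam : 0 < lam)
    (S : Finset (Fin n)) : regGram X lam S * regInv X lam S = 1 :=
  mul_nonsing_inv _ ((Matrix.isUnit_iff_isUnit_det _).mp (gram_posDef X hlam S).isUnit)

lemma inv_mul_gram {d n : ℕ} (X : Matrix (Fin d) (Fin n) ℝ) {lam : ℝ} (hlam : 0 < lam)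
    (S : Finset (Fin n)) : regInv X lam S * regGram X lam S = 1 :=
  nonsing_inv_mul _ ((Matrix.isUnit_iff_isUnit_det _).mp (gram_posDef X hlam S).isUnit)

lemma vecMulVec_mulVec' {m : ℕ} (w v u : Fin m → ℝ) :
    vecMulVec w v *ᵥ u = (v ⬝ᵥ u) • w := by
  funext i
  simp [mulVec, vecMulVec_apply, dotProduct, Finset.mul_sum, Finset.sum_mul, mul_assoc]
  exact Finset.sum_congr rfl fun j _ => by ring

lemma hWeight_pos {d n : ℕ} (X : Matrix (Fin d) (Fin n) ℝ) {lam : ℝ} (hlam : 0 < lam)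
    {S : Finset (Fin n)} {i : Fin n} (hi : i ∈ S) : 0 < hWeight X lam S i := by
  set x : Fin d → ℝ := fun k => X k i with hx
  set y : Fin d → ℝ := regInv X lam S *ᵥ x with hy
  have hc : hWeight X lam S i = 1 - x ⬝ᵥ y := rfl
  by_cases hy0 : y = 0
  · rw [hc, hy0]; simp
  · have hGe := gram_posDef X hlam (S.erase i)
    rw [gram_erase X lam hi] at hGe
    have hq := hGe.dotProduct_mulVec_pos (x := y) (by simpa using hy0)
    rw [star_trivial, sub_mulVec, dotProduct_sub] at hq
    have h1 : regGram X lam S *ᵥ y = x := by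
      rw [hy, mulVec_mulVec, gram_mul_inv X hlam, one_mulVec]
    have h2 : y ⬝ᵥ regGram X lam S *ᵥ y = x ⬝ᵥ y := by
      rw [h1, dotProduct_comm]
    have h3 : y ⬝ᵥ vecMulVec x x *ᵥ y = (x ⬝ᵥ y) * (x ⬝ᵥ y) := by
      rw [vecMulVec_mulVec', dotProduct_smul, smul_eq_mul, dotProduct_comm]
    rw [h2, h3] at hq
    rw [hc]
    nlinarith [hq]

lemma mul_vecMulVec' {m : ℕ} (A : Matrix (Fin m) (Fin m) ℝ) (w v : Fin m → ℝ) :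
    A * vecMulVec w v = vecMulVec (A *ᵥ w) v := by
  ext i j
  simp [mul_apply, vecMulVec_apply, mulVec, dotProduct, Finset.sum_mul]
  exact Finset.sum_congr rfl fun k _ => by ring

lemma vecMulVec_mul_vecMulVec {m : ℕ} (w v w' v' : Fin m → ℝ) :
    vecMulVec w v * vecMulVec w' v' = (v ⬝ᵥ w') • vecMulVec w v' := by
  ext i j
  simp [mul_apply, vecMulVec_apply, dotProduct, smul_eq_mul, Finset.sum_mul]
  exact Finset.sum_congr rfl fun k _ => by ring

lemma sandwich {m : ℕ} (x : Fin m → ℝ) (A : Matrix (Fin m) (Fin m) ℝ) :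
    vecMulVec x x * A * vecMulVec x x = (x ⬝ᵥ A *ᵥ x) • vecMulVec x x := by
  rw [Matrix.mul_assoc, mul_vecMulVec', vecMulVec_mul_vecMulVec]

lemma psd_smul {m : ℕ} {c : ℝ} (hc : 0 ≤ c) {A : Matrix (Fin m) (Fin m) ℝ}
    (hA : A.PosSemidef) : (c • A).PosSemidef := by
  refine posSemidef_iff_dotProduct_mulVec.mpr ⟨?_, fun x => ?_⟩
  · unfold Matrix.IsHermitian
    rw [conjTranspose_smul, hA.1.eq, star_trivial]
  · rw [smul_mulVec, dotProduct_smul, smul_eq_mul]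
    exact mul_nonneg hc (hA.dotProduct_mulVec_nonneg x)

lemma sherman_morrison {d n : ℕ} (X : Matrix (Fin d) (Fin n) ℝ) {lam : ℝ} (hlam : 0 < lam)
    {S : Finset (Fin n)} {i : Fin n} (hi : i ∈ S) :
    hWeight X lam S i • regInv X lam (S.erase i)
      = hWeight X lam S i • regInv X lam S
        + regInv X lam S * vecMulVec (fun k => X k i) (fun k => X k i) * regInv X lam S := by
  set x : Fin d → ℝ := fun k => X k i with hx
  set G := regGram X lam S with hG
  set Z := regInv X lam S with hZ
  set v := vecMulVec x x with hv
  set h := hWeight X lam S i with hh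
  set c := x ⬝ᵥ Z *ᵥ x with hcdef
  have hch : h = 1 - c := rfl
  have hpos : 0 < h := hWeight_pos X hlam hi
  have hGZ : G * Z = 1 := gram_mul_inv X hlam S
  have e1 : G * (Z * (v * Z)) = v * Z := by
    rw [← Matrix.mul_assoc, hGZ, Matrix.one_mul]
  have e2 : v * (Z * (v * Z)) = c • (v * Z) := by
    rw [← Matrix.mul_assoc, ← Matrix.mul_assoc]
    have : v * Z * v = c • v := sandwich x Z
    rw [this, smul_mul_assoc]
  have key : (G - v) * (Z + h⁻¹ • (Z * (v * Z))) = 1 := by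
    rw [Matrix.sub_mul, Matrix.mul_add, Matrix.mul_add, mul_smul_comm, mul_smul_comm,
      e1, e2, hGZ, smul_smul]
    have hc1 : h⁻¹ * c = h⁻¹ - 1 := by
      have : c = 1 - h := by rw [hch]; ring
      rw [this, mul_sub, mul_one, inv_mul_cancel₀ hpos.ne']
    rw [hc1, sub_smul, one_smul]
    abel
  have hinv : regInv X lam (S.erase i) = Z + h⁻¹ • (Z * (v * Z)) := by
    unfold regInv
    rw [gram_erase X lam hi]
    exact inv_eq_right_inv key
  rw [hinv, smul_add, smul_smul, mul_inv_cancel₀ hpos.ne', one_smul, Matrix.mul_assoc]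

/-- `∑_{i∈S} h_i(S) • Z_{S−i} = M • Z_S + Z_S − λ • Z_S²` where `M = ∑_{i∈S} h_i(S)`,
and hence `∑_{i∈S} h_i(S) • Z_{S−i} ⪯ (M+1) • Z_S` in the Loewner order. -/
theorem weighted_sum_inverse_identity_and_bound
    (d n : ℕ) (X : Matrix (Fin d) (Fin n) ℝ) (lam : ℝ) (hlam : 0 < lam)
    (S : Finset (Fin n)) :
    (∑ i ∈ S, hWeight X lam S i • regInv X lam (S.erase i))
        = (∑ i ∈ S, hWeight X lam S i) • regInv X lam S + regInv X lam S
          - lam • (regInv X lam S * regInv X lam S)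
    ∧ (((∑ i ∈ S, hWeight X lam S i) + 1) • regInv X lam S
        - ∑ i ∈ S, hWeight X lam S i • regInv X lam (S.erase i)).PosSemidef := by
  set Z := regInv X lam S with hZ
  have hsum : ∑ i ∈ S, vecMulVec (fun k => X k i) (fun k => X k i)
      = regGram X lam S - lam • 1 := by
    unfold regGram; abel
  have part1 : (∑ i ∈ S, hWeight X lam S i • regInv X lam (S.erase i))
      = (∑ i ∈ S, hWeight X lam S i) • Z + Z - lam • (Z * Z) := by
    rw [Finset.sum_congr rfl fun i hi => sherman_morrison X hlam hi,
      Finset.sum_add_distrib, ← Finset.sum_smul]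
    have e : ∑ i ∈ S, Z * vecMulVec (fun k => X k i) (fun k => X k i) * Z
        = Z - lam • (Z * Z) := by
      rw [← Finset.sum_mul, ← Finset.mul_sum, hsum, Matrix.mul_sub, Matrix.mul_smul,
        Matrix.mul_one, inv_mul_gram X hlam, Matrix.sub_mul, Matrix.one_mul, smul_mul_assoc]
    rw [e]
    abel
  refine ⟨part1, ?_⟩
  have heq : ((∑ i ∈ S, hWeight X lam S i) + 1) • Z
      - ∑ i ∈ S, hWeight X lam S i • regInv X lam (S.erase i) = lam • (Z * Z) := by
    rw [part1, add_smul, one_smul]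
    abel
  rw [heq]
  have hZpd : Z.PosDef := (gram_posDef X hlam S).inv
  have hzz := posSemidef_conjTranspose_mul_self Z
  rw [hZpd.isHermitian] at hzz
  exact psd_smul hlam.le hzz
end

section
/- Fix S ⊆ {1..n}. Under the model y = X^T w* + ξ with E[ξ] = 0, Var[ξ] ⪯ σ²I, and λ ≤ σ²/‖w*‖², the ridge estimator ŵ_S satisfies E_ξ‖X^T(ŵ_S − w*)‖² ≤ σ²·tr(X^T (X_S X_S^T + λI)^{-1} X). -/
open Matrix MeasureTheory

/-- The ridge estimator on the subproblem `(X_S, y_S)`: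
`ŵ_S = (X_S X_Sᵀ + λI)⁻¹ X_S y_S = (X_S X_Sᵀ + λI)⁻¹ ∑_{i∈S} y_i x_i`. -/
noncomputable def ridgeEst {d n : ℕ} (X : Matrix (Fin d) (Fin n) ℝ) (lam : ℝ)
    (S : Finset (Fin n)) (y : Fin n → ℝ) : Fin d → ℝ :=
  (regGram X lam S)⁻¹ *ᵥ (∑ i ∈ S, y i • (fun k => X k i))

lemma dotProduct_sum' {d : ℕ} {α : Type*} (s : Finset α) (v : Fin d → ℝ) (f : α → Fin d → ℝ) :
    v ⬝ᵥ (∑ i ∈ s, f i) = ∑ i ∈ s, v ⬝ᵥ f i := by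
  simp only [dotProduct, Finset.sum_apply, Finset.mul_sum]
  exact Finset.sum_comm

lemma sum_mulVec' {d : ℕ} {α : Type*} (s : Finset α) (M : α → Matrix (Fin d) (Fin d) ℝ)
    (v : Fin d → ℝ) : (∑ i ∈ s, M i) *ᵥ v = ∑ i ∈ s, M i *ᵥ v := by
  funext k
  simp only [Matrix.mulVec, dotProduct, Finset.sum_apply, Matrix.sum_apply, Finset.sum_mul]
  exact Finset.sum_comm

lemma vecMulVec_mulVec'_s11 {d : ℕ} (a b v : Fin d → ℝ) :
    Matrix.vecMulVec a b *ᵥ v = (b ⬝ᵥ v) • a := by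
  funext k
  simp [Matrix.mulVec, Matrix.vecMulVec_apply, dotProduct, Finset.sum_mul, Finset.mul_sum,
    mul_comm, mul_left_comm]

lemma regGram_mulVec {d n : ℕ} (X : Matrix (Fin d) (Fin n) ℝ) (lam : ℝ)
    (S : Finset (Fin n)) (v : Fin d → ℝ) :
    regGram X lam S *ᵥ v
      = (∑ i ∈ S, ((fun k => X k i) ⬝ᵥ v) • (fun k => X k i)) + lam • v := by
  simp [regGram, Matrix.add_mulVec, sum_mulVec', vecMulVec_mulVec'_s11, Matrix.smul_mulVec]

lemma regGram_transpose {d n : ℕ} (X : Matrix (Fin d) (Fin n) ℝ) (lam : ℝ)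
    (S : Finset (Fin n)) : (regGram X lam S)ᵀ = regGram X lam S := by
  ext k l
  simp only [regGram, Matrix.transpose_apply, Matrix.add_apply, Matrix.sum_apply,
    Matrix.vecMulVec_apply, Matrix.smul_apply, Matrix.one_apply, mul_comm]
  rcases eq_or_ne k l with h | h
  · simp [h]
  · simp [h, Ne.symm h]

lemma regGram_posDef {d n : ℕ} (X : Matrix (Fin d) (Fin n) ℝ) (lam : ℝ)
    (S : Finset (Fin n)) (hlam : 0 < lam) : (regGram X lam S).PosDef := by
  rw [Matrix.posDef_iff_dotProduct_mulVec]
  constructor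
  · show (regGram X lam S)ᴴ = _
    rw [Matrix.conjTranspose_eq_transpose_of_trivial, regGram_transpose]
  · intro x hx
    have hstar : star x = x := by simp
    rw [hstar, regGram_mulVec, dotProduct_add, dotProduct_sum']
    have h1 : 0 < lam * (x ⬝ᵥ x) := by
      apply mul_pos hlam
      have := Matrix.dotProduct_self_star_pos_iff (v := x)
      rw [hstar] at this
      exact this.mpr hx
    have h2 : ∀ i ∈ S, (0:ℝ) ≤ x ⬝ᵥ (((fun k => X k i) ⬝ᵥ x) • (fun k => X k i)) := by
      intro i _
      rw [dotProduct_smul]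
      have h3 : x ⬝ᵥ (fun k => X k i) = (fun k => X k i) ⬝ᵥ x := dotProduct_comm _ _
      simp only [smul_eq_mul, h3]
      exact mul_self_nonneg _
    have h4 := Finset.sum_nonneg h2
    have h5 : x ⬝ᵥ lam • x = lam * (x ⬝ᵥ x) := by rw [dotProduct_smul]; rfl
    rw [h5]
    exact add_pos_of_nonneg_of_pos h4 h1

/-- MSPE bound for fixed `S`: under `y = Xᵀw* + ξ`, `E[ξ]=0`, `Var[ξ] ⪯ σ²I` and
`λ ≤ σ²/‖w*‖²`, we have `E_ξ‖Xᵀ(ŵ_S − w*)‖² ≤ σ²·tr(Xᵀ(X_S X_Sᵀ + λI)⁻¹X)`. -/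
theorem ridge_mspe_fixed_subset
    (d n : ℕ) (X : Matrix (Fin d) (Fin n) ℝ) (w : Fin d → ℝ) (lam σ : ℝ)
    (hlam : 0 < lam) (hreg : lam * (∑ k, w k ^ 2) ≤ σ ^ 2)
    {Ω : Type} [MeasurableSpace Ω] (μ : Measure Ω) [IsProbabilityMeasure μ]
    (ξ : Ω → Fin n → ℝ)
    (hint : ∀ i, Integrable (fun ω => ξ ω i) μ)
    (hint2 : ∀ i j, Integrable (fun ω => ξ ω i * ξ ω j) μ)
    (hmean : ∀ i, ∫ ω, ξ ω i ∂μ = 0)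
    (hvar : ∀ u : Fin n → ℝ, ∫ ω, (ξ ω ⬝ᵥ u) ^ 2 ∂μ ≤ σ ^ 2 * (u ⬝ᵥ u))
    (S : Finset (Fin n)) :
    ∫ ω, (∑ i : Fin n,
        ((Xᵀ *ᵥ fun k => ridgeEst X lam S (fun j => (Xᵀ *ᵥ w) j + ξ ω j) k - w k) i) ^ 2) ∂μ
      ≤ σ ^ 2 * (Xᵀ * (regGram X lam S)⁻¹ * X).trace := by
  classical
  have hσ2 : (0:ℝ) ≤ σ ^ 2 := sq_nonneg σ
  set A := regGram X lam S with hAdef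
  set Z := A⁻¹ with hZdef
  have hpd : A.PosDef := regGram_posDef X lam S hlam
  have hdet : IsUnit A.det := hpd.det_pos.ne'.isUnit
  have hZA : Z * A = 1 := Matrix.nonsing_inv_mul A hdet
  have hAZ : A * Z = 1 := Matrix.mul_nonsing_inv A hdet
  have hAsymm : Aᵀ = A := regGram_transpose X lam S
  have hZsymm : Zᵀ = Z := by
    rw [hZdef, Matrix.transpose_nonsing_inv, hAsymm]
  set x : Fin n → Fin d → ℝ := fun i k => X k i with hxdef
  set p : Fin n → Fin d → ℝ := fun j => Z *ᵥ x j with hpdef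
  set c : Fin n → ℝ := fun j => -(lam * (p j ⬝ᵥ w)) with hcdef
  set u : Fin n → Fin n → ℝ := fun j i => if i ∈ S then p j ⬝ᵥ x i else 0 with hudef
  have hdotZ : ∀ (a m : Fin d → ℝ), a ⬝ᵥ (Z *ᵥ m) = (Z *ᵥ a) ⬝ᵥ m := by
    intro a m
    rw [Matrix.dotProduct_mulVec, ← Matrix.mulVec_transpose, hZsymm]
  -- pointwise identity
  have hXTw : ∀ i, (Xᵀ *ᵥ w) i = x i ⬝ᵥ w := by
    intro i; simp [Matrix.mulVec, Matrix.transpose_apply, dotProduct, hxdef]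
  have hw : ∀ e : Fin n → ℝ, ridgeEst X lam S (fun i => (Xᵀ *ᵥ w) i + e i)
      = w - lam • (Z *ᵥ w) + Z *ᵥ (∑ i ∈ S, e i • x i) := by
    intro e
    have hsum1 : (∑ i ∈ S, (x i ⬝ᵥ w) • x i) = A *ᵥ w - lam • w := by
      rw [hAdef, regGram_mulVec]
      simp [hxdef]
    have hsplit : (∑ i ∈ S, ((Xᵀ *ᵥ w) i + e i) • x i)
        = (A *ᵥ w - lam • w) + ∑ i ∈ S, e i • x i := by
      rw [← hsum1, ← Finset.sum_add_distrib]
      refine Finset.sum_congr rfl fun i _ => ?_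
      rw [hXTw i, add_smul]
    show Z *ᵥ (∑ i ∈ S, ((Xᵀ *ᵥ w) i + e i) • x i) = _
    rw [hsplit, Matrix.mulVec_add, Matrix.mulVec_sub, Matrix.mulVec_mulVec, hZA,
      Matrix.one_mulVec, Matrix.mulVec_smul]
  have hpt : ∀ (e : Fin n → ℝ) (j : Fin n),
      (Xᵀ *ᵥ fun k => ridgeEst X lam S (fun i => (Xᵀ *ᵥ w) i + e i) k - w k) j
        = c j + e ⬝ᵥ u j := by
    intro e j
    have h0 : (fun k => ridgeEst X lam S (fun i => (Xᵀ *ᵥ w) i + e i) k - w k)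
        = fun k => (-(lam • (Z *ᵥ w)) + Z *ᵥ (∑ i ∈ S, e i • x i)) k := by
      funext k
      rw [hw e]
      simp [sub_eq_add_neg]
      ring
    rw [h0]
    have h1 : (Xᵀ *ᵥ fun k => (-(lam • (Z *ᵥ w)) + Z *ᵥ (∑ i ∈ S, e i • x i)) k) j
        = x j ⬝ᵥ (-(lam • (Z *ᵥ w)) + Z *ᵥ (∑ i ∈ S, e i • x i)) := by
      simp [Matrix.mulVec, Matrix.transpose_apply, dotProduct, hxdef]
    rw [h1, dotProduct_add, dotProduct_neg, dotProduct_smul, hdotZ, hdotZ]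
    have h2 : (Z *ᵥ x j) ⬝ᵥ (∑ i ∈ S, e i • x i) = e ⬝ᵥ u j := by
      rw [dotProduct_sum']
      have h3 : ∀ i ∈ S, (Z *ᵥ x j) ⬝ᵥ (e i • x i) = e i * (p j ⬝ᵥ x i) := by
        intro i _
        rw [dotProduct_smul]
        simp [hpdef]
      rw [Finset.sum_congr rfl h3]
      have h4 : e ⬝ᵥ u j = ∑ i, if i ∈ S then e i * (p j ⬝ᵥ x i) else 0 := by
        simp only [dotProduct, hudef, mul_ite, mul_zero]
      rw [h4, Finset.sum_ite_mem, Finset.univ_inter]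
    rw [h2, hcdef, hpdef]
    try simp only [smul_eq_mul]
    try ring_nf
  -- deterministic facts
  have hApZ : ∀ j, A *ᵥ p j = x j := by
    intro j
    show A *ᵥ (Z *ᵥ x j) = x j
    rw [Matrix.mulVec_mulVec, hAZ, Matrix.one_mulVec]
  have hkey : ∀ j, (∑ i ∈ S, (p j ⬝ᵥ x i) ^ 2) + lam * (p j ⬝ᵥ p j) = p j ⬝ᵥ x j := by
    intro j
    have h1 : p j ⬝ᵥ (A *ᵥ p j) = p j ⬝ᵥ x j := by rw [hApZ]
    rw [hAdef, regGram_mulVec, dotProduct_add, dotProduct_sum'] at h1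
    have h2 : ∀ i ∈ S, p j ⬝ᵥ (((fun k => X k i) ⬝ᵥ p j) • fun k => X k i)
        = (p j ⬝ᵥ x i) ^ 2 := by
      intro i _
      rw [dotProduct_smul]
      have : (fun k => X k i) ⬝ᵥ p j = p j ⬝ᵥ x i := by
        rw [hxdef]; exact dotProduct_comm _ _
      rw [this]
      simp [sq, hxdef]
      try ring
    rw [Finset.sum_congr rfl h2] at h1
    have h5 : p j ⬝ᵥ lam • p j = lam * (p j ⬝ᵥ p j) := by rw [dotProduct_smul]; rfl
    rw [h5] at h1
    exact h1
  have hpp : ∀ j, (0:ℝ) ≤ p j ⬝ᵥ p j := by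
    intro j
    have : p j ⬝ᵥ p j = ∑ k, p j k ^ 2 := by simp [dotProduct, sq]
    rw [this]
    exact Finset.sum_nonneg fun k _ => sq_nonneg _
  have hCS : ∀ j, (p j ⬝ᵥ w) ^ 2 ≤ (p j ⬝ᵥ p j) * (∑ k, w k ^ 2) := by
    intro j
    have e1 : p j ⬝ᵥ p j = ∑ k, p j k ^ 2 := by simp [dotProduct, sq]
    have e2 : p j ⬝ᵥ w = ∑ k, p j k * w k := rfl
    rw [e1, e2]
    exact Finset.sum_mul_sq_le_sq_mul_sq _ _ _
  have huu : ∀ j, u j ⬝ᵥ u j = ∑ i ∈ S, (p j ⬝ᵥ x i) ^ 2 := by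
    intro j
    have h1 : ∀ i : Fin n, u j i * u j i = if i ∈ S then (p j ⬝ᵥ x i) ^ 2 else 0 := by
      intro i
      by_cases h : i ∈ S <;> simp [hudef, h, sq]
    calc u j ⬝ᵥ u j = ∑ i, if i ∈ S then (p j ⬝ᵥ x i) ^ 2 else 0 := by
          simp only [dotProduct]
          exact Finset.sum_congr rfl fun i _ => h1 i
      _ = ∑ i ∈ S, (p j ⬝ᵥ x i) ^ 2 := by rw [Finset.sum_ite_mem, Finset.univ_inter]
  have hdetj : ∀ j, c j ^ 2 + σ ^ 2 * (u j ⬝ᵥ u j) ≤ σ ^ 2 * (x j ⬝ᵥ p j) := by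
    intro j
    have h6 : c j ^ 2 ≤ (lam * (p j ⬝ᵥ p j)) * σ ^ 2 := by
      have hc2 : c j ^ 2 = lam ^ 2 * (p j ⬝ᵥ w) ^ 2 := by rw [hcdef]; ring
      calc c j ^ 2 = lam ^ 2 * (p j ⬝ᵥ w) ^ 2 := hc2
        _ ≤ lam ^ 2 * ((p j ⬝ᵥ p j) * ∑ k, w k ^ 2) :=
            mul_le_mul_of_nonneg_left (hCS j) (sq_nonneg lam)
        _ = (lam * (p j ⬝ᵥ p j)) * (lam * ∑ k, w k ^ 2) := by ring
        _ ≤ (lam * (p j ⬝ᵥ p j)) * σ ^ 2 :=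
            mul_le_mul_of_nonneg_left hreg (mul_nonneg hlam.le (hpp j))
    have h7 : σ ^ 2 * (u j ⬝ᵥ u j) = σ ^ 2 * (p j ⬝ᵥ x j) - σ ^ 2 * (lam * (p j ⬝ᵥ p j)) := by
      rw [huu j]
      have := hkey j
      nlinarith [hkey j]
    have h8 : x j ⬝ᵥ p j = p j ⬝ᵥ x j := dotProduct_comm _ _
    rw [h7, h8]
    linarith [h6]
  have htr : (Xᵀ * Z * X).trace = ∑ j, x j ⬝ᵥ p j := by
    simp only [Matrix.trace, Matrix.diag_apply, Matrix.mul_apply, Matrix.transpose_apply]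
    refine Finset.sum_congr rfl fun j _ => ?_
    simp only [hpdef, hxdef, dotProduct, Matrix.mulVec, Finset.sum_mul, Finset.mul_sum]
    rw [Finset.sum_comm]
    refine Finset.sum_congr rfl fun k _ => Finset.sum_congr rfl fun l _ => by ring
  -- integrability
  have hIs : ∀ j, Integrable (fun ω => ξ ω ⬝ᵥ u j) μ := by
    intro j
    have he : (fun ω => ξ ω ⬝ᵥ u j) = fun ω => ∑ i, ξ ω i * u j i := rfl
    rw [he]
    exact integrable_finset_sum _ fun i _ => (hint i).mul_const _
  have hIs2 : ∀ j, Integrable (fun ω => (ξ ω ⬝ᵥ u j) ^ 2) μ := by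
    intro j
    have he : (fun ω => (ξ ω ⬝ᵥ u j) ^ 2)
        = fun ω => ∑ i, ∑ k, (u j i * u j k) * (ξ ω i * ξ ω k) := by
      funext ω
      rw [dotProduct, sq, Finset.sum_mul_sum]
      exact Finset.sum_congr rfl fun i _ => Finset.sum_congr rfl fun k _ => by ring
    rw [he]
    exact integrable_finset_sum _ fun i _ =>
      integrable_finset_sum _ fun k _ => (hint2 i k).const_mul _
  have hIj : ∀ j, Integrable (fun ω => (c j + ξ ω ⬝ᵥ u j) ^ 2) μ := by
    intro j
    have he : (fun ω => (c j + ξ ω ⬝ᵥ u j) ^ 2)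
        = fun ω => (c j ^ 2 + (2 * c j) * (ξ ω ⬝ᵥ u j)) + (ξ ω ⬝ᵥ u j) ^ 2 := by
      funext ω; ring
    rw [he]
    exact ((integrable_const _).add ((hIs j).const_mul _)).add (hIs2 j)
  have hEs : ∀ j, ∫ ω, ξ ω ⬝ᵥ u j ∂μ = 0 := by
    intro j
    have he : (fun ω => ξ ω ⬝ᵥ u j) = fun ω => ∑ i, ξ ω i * u j i := rfl
    rw [he, integral_finset_sum _ fun i _ => (hint i).mul_const _]
    simp [integral_mul_const, hmean]
  have hEj : ∀ j, ∫ ω, (c j + ξ ω ⬝ᵥ u j) ^ 2 ∂μ ≤ c j ^ 2 + σ ^ 2 * (u j ⬝ᵥ u j) := by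
    intro j
    have he : (fun ω => (c j + ξ ω ⬝ᵥ u j) ^ 2)
        = fun ω => (c j ^ 2 + (2 * c j) * (ξ ω ⬝ᵥ u j)) + (ξ ω ⬝ᵥ u j) ^ 2 := by
      funext ω; ring
    have hI1a : Integrable (fun _ : Ω => c j ^ 2) μ := integrable_const _
    have hI1b : Integrable (fun ω => (2 * c j) * (ξ ω ⬝ᵥ u j)) μ := (hIs j).const_mul _
    have hI1 : Integrable (fun ω => c j ^ 2 + (2 * c j) * (ξ ω ⬝ᵥ u j)) μ := hI1a.add hI1b
    have h1 : ∫ ω, (c j + ξ ω ⬝ᵥ u j) ^ 2 ∂μ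
        = c j ^ 2 + ∫ ω, (ξ ω ⬝ᵥ u j) ^ 2 ∂μ := by
      rw [he, integral_add hI1 (hIs2 j), integral_add hI1a hI1b,
        integral_const_mul, hEs j]
      simp
    rw [h1]
    exact add_le_add_right (hvar (u j)) _
  -- main chain
  calc ∫ ω, (∑ i : Fin n,
        ((Xᵀ *ᵥ fun k => ridgeEst X lam S (fun j => (Xᵀ *ᵥ w) j + ξ ω j) k - w k) i) ^ 2) ∂μ
      = ∫ ω, (∑ j, (c j + ξ ω ⬝ᵥ u j) ^ 2) ∂μ := by
        refine integral_congr_ae (Filter.Eventually.of_forall fun ω => ?_)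
        exact Finset.sum_congr rfl fun j _ => by rw [hpt (ξ ω) j]
    _ = ∑ j, ∫ ω, (c j + ξ ω ⬝ᵥ u j) ^ 2 ∂μ := integral_finset_sum _ fun j _ => hIj j
    _ ≤ ∑ j, (c j ^ 2 + σ ^ 2 * (u j ⬝ᵥ u j)) := Finset.sum_le_sum fun j _ => hEj j
    _ ≤ ∑ j, σ ^ 2 * (x j ⬝ᵥ p j) := Finset.sum_le_sum fun j _ => hdetj j
    _ = σ ^ 2 * (Xᵀ * Z * X).trace := by rw [htr, Finset.mul_sum]
end

section
/- (Coupon collector lower bound) If a multiset S of size s ≤ d(ln(d) − 1) is drawn i.i.d. from any probability distribution over {1..n}, where each element of {1..n} is assigned one of d labels with n/d elements per label, then with probability at least 1/2 some label i ∈ {1..d} is never selected (i.e., s_i = 0). -/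
open scoped Classical

set_option maxHeartbeats 2000000 in
/-- Coupon collector lower bound: if a multiset of `s ≤ d(ln d − 1)` indices is drawn
i.i.d. from any distribution `p` over `{1..n}`, where each index carries one of `d` labels
with `n/d` indices per label, then with probability at least `1/2` some label is never
selected. -/
theorem coupon_collector_lower_bound
    (n d s : ℕ) (hd : 2 ≤ d) (hdn : d ∣ n)
    (lab : Fin n → Fin d)
    (hfib : ∀ j : Fin d, (Finset.univ.filter (fun i => lab i = j)).card = n / d)
    (p : Fin n → ℝ) (hp0 : ∀ i, 0 ≤ p i) (hp1 : ∑ i, p i = 1)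
    (hs : (s : ℝ) ≤ (d : ℝ) * (Real.log d - 1)) :
    (1 : ℝ) / 2 ≤
      ∑ f ∈ Finset.univ.filter
          (fun f : Fin s → Fin n => ∃ j : Fin d, ∀ t, lab (f t) ≠ j),
        ∏ t, p (f t) := by
  classical
  set μ : (Fin s → Fin n) → ℝ := fun f => ∏ t, p (f t) with hμdef
  have hμ0 : ∀ f, 0 ≤ μ f := fun f => Finset.prod_nonneg fun t _ => hp0 _
  -- cylinder sets
  have cyl : ∀ S : Finset (Fin n),
      (∑ f ∈ Finset.univ.filter (fun f : Fin s → Fin n => ∀ t, f t ∈ S), μ f)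
        = (∑ i ∈ S, p i) ^ s := by
    intro S
    have h1 : Finset.univ.filter (fun f : Fin s → Fin n => ∀ t, f t ∈ S)
        = Fintype.piFinset (fun _ : Fin s => S) := by
      ext f; simp [Fintype.mem_piFinset]
    rw [h1, Finset.sum_pow' S p s]
  set q : Fin d → ℝ := fun j => ∑ i ∈ Finset.univ.filter (fun i => lab i = j), p i with hqdef
  have hq0 : ∀ j, 0 ≤ q j := fun j => Finset.sum_nonneg fun i _ => hp0 i
  have hqsum : ∑ j, q j = 1 := by
    rw [hqdef]
    rw [Finset.sum_fiberwise Finset.univ lab p]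
    exact hp1
  have hq1 : ∀ j, q j ≤ 1 := by
    intro j
    rw [← hqsum]
    exact Finset.single_le_sum (fun k _ => hq0 k) (Finset.mem_univ j)
  have hcomp : ∀ j, (∑ i ∈ Finset.univ.filter (fun i => lab i ≠ j), p i) = 1 - q j := by
    intro j
    have h := Finset.sum_filter_add_sum_filter_not Finset.univ (fun i => lab i = j) p
    rw [hp1] at h
    simp only [hqdef]
    linarith [h]
  have hpair : ∀ j k : Fin d, j ≠ k →
      (∑ i ∈ Finset.univ.filter (fun i => lab i ≠ j ∧ lab i ≠ k), p i) = 1 - q j - q k := by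
    intro j k hjk
    have h := Finset.sum_filter_add_sum_filter_not Finset.univ (fun i => lab i = j ∨ lab i = k) p
    rw [hp1] at h
    have h2 : Finset.univ.filter (fun i => lab i = j ∨ lab i = k)
        = Finset.univ.filter (fun i => lab i = j) ∪ Finset.univ.filter (fun i => lab i = k) :=
      Finset.filter_or _ _ _
    have hdisj : Disjoint (Finset.univ.filter (fun i => lab i = j))
        (Finset.univ.filter (fun i => lab i = k)) := by
      rw [Finset.disjoint_left]
      intro i hi hi'
      simp only [Finset.mem_filter] at hi hi'
      exact hjk (hi.2 ▸ hi'.2 ▸ rfl)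
    rw [h2, Finset.sum_union hdisj] at h
    have h3 : Finset.univ.filter (fun i => ¬(lab i = j ∨ lab i = k))
        = Finset.univ.filter (fun i => lab i ≠ j ∧ lab i ≠ k) := by
      ext i; simp [not_or]
    rw [h3] at h
    simp only [hqdef]
    linarith [h]
  -- single events
  have hEj : ∀ j : Fin d,
      (∑ f ∈ Finset.univ.filter (fun f : Fin s → Fin n => ∀ t, lab (f t) ≠ j), μ f)
        = (1 - q j) ^ s := by
    intro j
    have heq : Finset.univ.filter (fun f : Fin s → Fin n => ∀ t, lab (f t) ≠ j)
        = Finset.univ.filter (fun f : Fin s → Fin n =>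
            ∀ t, f t ∈ Finset.univ.filter (fun i => lab i ≠ j)) := by
      ext f; simp
    rw [heq, cyl _, hcomp j]
  -- pair events
  have hEjk : ∀ j k : Fin d, j ≠ k →
      (∑ f ∈ Finset.univ.filter (fun f : Fin s → Fin n =>
          (∀ t, lab (f t) ≠ j) ∧ (∀ t, lab (f t) ≠ k)), μ f)
        = (1 - q j - q k) ^ s := by
    intro j k hjk
    have heq : Finset.univ.filter (fun f : Fin s → Fin n =>
          (∀ t, lab (f t) ≠ j) ∧ (∀ t, lab (f t) ≠ k))
        = Finset.univ.filter (fun f : Fin s → Fin n =>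
            ∀ t, f t ∈ Finset.univ.filter (fun i => lab i ≠ j ∧ lab i ≠ k)) := by
      ext f
      simp [forall_and]
    rw [heq, cyl _, hpair j k hjk]
  set P : Fin d → ℝ := fun j => (1 - q j) ^ s with hPdef
  have hP0 : ∀ j, 0 ≤ P j := fun j => pow_nonneg (by linarith [hq1 j]) s
  set μ₁ : ℝ := ∑ j, P j with hμ₁def
  have hμ₁0 : 0 ≤ μ₁ := Finset.sum_nonneg fun j _ => hP0 j
  -- X f : number of missed labels
  set X : (Fin s → Fin n) → ℝ := fun f =>
    ((Finset.univ.filter (fun j : Fin d => ∀ t, lab (f t) ≠ j)).card : ℝ) with hXdef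
  have hXsum : ∀ f, X f = ∑ j : Fin d, if (∀ t, lab (f t) ≠ j) then (1 : ℝ) else 0 := by
    intro f
    simp only [hXdef, Finset.card_filter]
    push_cast
    rfl
  -- first moment
  have hEX : (∑ f : Fin s → Fin n, X f * μ f) = μ₁ := by
    simp only [hXsum, Finset.sum_mul, hμ₁def, hPdef]
    rw [Finset.sum_comm]
    refine Finset.sum_congr rfl fun j _ => ?_
    rw [← hEj j, Finset.sum_filter]
    refine Finset.sum_congr rfl fun f _ => ?_
    by_cases h : ∀ t, lab (f t) ≠ j <;> simp [h]
  -- second moment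
  have hEX2 : (∑ f : Fin s → Fin n, X f ^ 2 * μ f) ≤ μ₁ + μ₁ ^ 2 := by
    have hXsq : ∀ f, X f ^ 2 = ∑ j : Fin d, ∑ k : Fin d,
        if (∀ t, lab (f t) ≠ j) ∧ (∀ t, lab (f t) ≠ k) then (1 : ℝ) else 0 := by
      intro f
      rw [sq, hXsum f, Finset.sum_mul_sum]
      refine Finset.sum_congr rfl fun j _ => Finset.sum_congr rfl fun k _ => ?_
      by_cases h1 : ∀ t, lab (f t) ≠ j <;> by_cases h2 : ∀ t, lab (f t) ≠ k <;>
        simp [h1, h2]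
    have hswap : (∑ f : Fin s → Fin n, X f ^ 2 * μ f)
        = ∑ j : Fin d, ∑ k : Fin d,
            ∑ f ∈ Finset.univ.filter (fun f : Fin s → Fin n =>
              (∀ t, lab (f t) ≠ j) ∧ (∀ t, lab (f t) ≠ k)), μ f := by
      simp only [hXsq, Finset.sum_mul]
      rw [Finset.sum_comm]
      refine Finset.sum_congr rfl fun j _ => ?_
      rw [Finset.sum_comm]
      refine Finset.sum_congr rfl fun k _ => ?_
      rw [Finset.sum_filter]
      refine Finset.sum_congr rfl fun f _ => ?_
      by_cases h : (∀ t, lab (f t) ≠ j) ∧ (∀ t, lab (f t) ≠ k) <;> simp [h]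
    rw [hswap]
    have hterm : ∀ j k : Fin d,
        (∑ f ∈ Finset.univ.filter (fun f : Fin s → Fin n =>
            (∀ t, lab (f t) ≠ j) ∧ (∀ t, lab (f t) ≠ k)), μ f)
          ≤ P j * P k + (if j = k then P j else 0) := by
      intro j k
      by_cases hjk : j = k
      · subst hjk
        have : Finset.univ.filter (fun f : Fin s → Fin n =>
              (∀ t, lab (f t) ≠ j) ∧ (∀ t, lab (f t) ≠ j))
            = Finset.univ.filter (fun f : Fin s → Fin n => ∀ t, lab (f t) ≠ j) := by
          ext f; simp
        rw [this, hEj j]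
        simp only [hPdef]
        norm_num
        nlinarith [pow_nonneg (show (0:ℝ) ≤ 1 - q j by linarith [hq1 j]) s]
      · rw [hEjk j k hjk]
        simp only [if_neg hjk, add_zero]
        have hnn : (0:ℝ) ≤ 1 - q j - q k := by
          rw [← hpair j k hjk]
          exact Finset.sum_nonneg fun i _ => hp0 i
        have hle : 1 - q j - q k ≤ (1 - q j) * (1 - q k) := by
          nlinarith [hq0 j, hq0 k]
        calc (1 - q j - q k) ^ s ≤ ((1 - q j) * (1 - q k)) ^ s := pow_le_pow_left₀ hnn hle s
          _ = P j * P k := by simp only [hPdef]; rw [mul_pow]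
    calc (∑ j : Fin d, ∑ k : Fin d, ∑ f ∈ Finset.univ.filter (fun f : Fin s → Fin n =>
              (∀ t, lab (f t) ≠ j) ∧ (∀ t, lab (f t) ≠ k)), μ f)
        ≤ ∑ j : Fin d, ∑ k : Fin d, (P j * P k + (if j = k then P j else 0)) := by
          refine Finset.sum_le_sum fun j _ => Finset.sum_le_sum fun k _ => hterm j k
      _ = μ₁ ^ 2 + μ₁ := by
          simp only [Finset.sum_add_distrib]
          rw [← Finset.sum_mul_sum]
          congr 1
          · rw [sq]
          · rw [hμ₁def]
            refine Finset.sum_congr rfl fun j _ => ?_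
            rw [Finset.sum_ite_eq Finset.univ j (fun _ => P j)]
            simp
      _ = μ₁ + μ₁ ^ 2 := by ring
  -- μ₁ ≥ 1
  have hμ₁1 : 1 ≤ μ₁ := by
    rcases Nat.eq_zero_or_pos s with hs0 | hspos
    · subst hs0
      simp only [hμ₁def, hPdef, pow_zero]
      rw [Finset.sum_const]
      simp only [Finset.card_univ, Fintype.card_fin, nsmul_eq_mul, mul_one]
      exact_mod_cast le_trans (by norm_num) hd
    · obtain ⟨m, rfl⟩ : ∃ m, s = m + 1 := ⟨s - 1, (Nat.succ_pred_eq_of_pos hspos).symm⟩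
      have hjensen := pow_sum_div_card_le_sum_pow
        (s := (Finset.univ : Finset (Fin d))) (f := fun j => 1 - q j)
        (fun j _ => by show (0:ℝ) ≤ 1 - q j; linarith [hq1 j]) m
      have hsum1 : (∑ j : Fin d, (1 - q j)) = (d : ℝ) - 1 := by
        rw [Finset.sum_sub_distrib, hqsum, Finset.sum_const]
        simp
      rw [hsum1] at hjensen
      simp only [Finset.card_univ, Fintype.card_fin] at hjensen
      -- show 1 ≤ ((d:ℝ)-1)^(m+1) / d^m
      have hd2 : (2:ℝ) ≤ (d:ℝ) := by exact_mod_cast hd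
      have hdpos : (0:ℝ) < (d:ℝ) := by linarith
      have hd1pos : (0:ℝ) < (d:ℝ) - 1 := by linarith
      have hlogle : Real.log ((d:ℝ) / ((d:ℝ) - 1)) ≤ 1 / ((d:ℝ) - 1) := by
        have := Real.log_le_sub_one_of_pos (x := (d:ℝ) / ((d:ℝ) - 1)) (by positivity)
        have h4 : (d:ℝ) / ((d:ℝ) - 1) - 1 = 1 / ((d:ℝ) - 1) := by
          field_simp
          ring
        linarith [this, h4.le]
      have hslog : ((m:ℝ) + 1) * Real.log ((d:ℝ) / ((d:ℝ) - 1)) ≤ Real.log d := by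
        have hlogd : Real.log (d:ℝ) ≤ (d:ℝ) - 1 := Real.log_le_sub_one_of_pos hdpos
        have hsle : ((m:ℝ) + 1) ≤ ((d:ℝ) - 1) * Real.log d := by
          have h1 : ((m:ℝ) + 1) ≤ (d:ℝ) * (Real.log d - 1) := by
            push_cast at hs ⊢; linarith [hs]
          nlinarith [hlogd]
        have hlognn : 0 ≤ Real.log ((d:ℝ)/((d:ℝ)-1)) := by
          apply Real.log_nonneg
          rw [le_div_iff₀ hd1pos]; linarith
        calc ((m:ℝ) + 1) * Real.log ((d:ℝ) / ((d:ℝ) - 1))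
            ≤ ((d:ℝ) - 1) * Real.log d * (1 / ((d:ℝ) - 1)) := by
              apply mul_le_mul hsle hlogle hlognn
              positivity
          _ = Real.log d := by field_simp
      -- exponentiate
      have hkey : (1:ℝ) ≤ ((d:ℝ) - 1) ^ (m+1) / (d:ℝ) ^ m := by
        rw [le_div_iff₀ (by positivity)]
        rw [one_mul]
        have hlogineq : Real.log ((d:ℝ) ^ m) ≤ Real.log (((d:ℝ) - 1) ^ (m+1)) := by
          rw [Real.log_pow, Real.log_pow]
          have hlogquot : Real.log ((d:ℝ) / ((d:ℝ) - 1))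
              = Real.log d - Real.log ((d:ℝ) - 1) := Real.log_div (by positivity) (by positivity)
          push_cast
          nlinarith [hslog, hlogquot]
        have := Real.exp_le_exp.2 hlogineq
        rwa [Real.exp_log (by positivity), Real.exp_log (by positivity)] at this
      linarith [hjensen, hkey]
  -- restrict sums to the event
  set E : Finset (Fin s → Fin n) :=
    Finset.univ.filter (fun f : Fin s → Fin n => ∃ j : Fin d, ∀ t, lab (f t) ≠ j) with hEdef
  have hXzero : ∀ f, f ∉ E → X f = 0 := by
    intro f hf
    rw [hEdef] at hf
    simp only [Finset.mem_filter, Finset.mem_univ, true_and, not_exists] at hf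
    simp only [hXdef]
    norm_cast
    rw [Finset.card_eq_zero, Finset.filter_eq_empty_iff]
    intro j _
    exact hf j
  have hE1 : (∑ f ∈ E, X f * μ f) = μ₁ := by
    rw [← hEX]
    apply Finset.sum_subset (Finset.subset_univ E)
    intro f _ hf
    rw [hXzero f hf, zero_mul]
  have hE2 : (∑ f ∈ E, X f ^ 2 * μ f) ≤ μ₁ + μ₁ ^ 2 := by
    refine le_trans ?_ hEX2
    apply Finset.sum_le_sum_of_subset_of_nonneg (Finset.subset_univ E)
    intro f _ _
    exact mul_nonneg (sq_nonneg _) (hμ0 f)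
  have hCS := Finset.sum_sq_le_sum_mul_sum_of_sq_eq_mul E
    (r := fun f => X f * μ f) (f := fun f => μ f) (g := fun f => X f ^ 2 * μ f)
    (fun f _ => hμ0 f) (fun f _ => mul_nonneg (sq_nonneg _) (hμ0 f))
    (fun f _ => by ring)
  rw [hE1] at hCS
  set Pev : ℝ := ∑ f ∈ E, μ f with hPevdef
  have hPev0 : 0 ≤ Pev := Finset.sum_nonneg fun f _ => hμ0 f
  have hfinal : μ₁ ^ 2 ≤ Pev * (μ₁ + μ₁ ^ 2) := by
    calc μ₁ ^ 2 ≤ Pev * (∑ f ∈ E, X f ^ 2 * μ f) := hCS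
      _ ≤ Pev * (μ₁ + μ₁ ^ 2) := by
          apply mul_le_mul_of_nonneg_left hE2 hPev0
  show (1:ℝ)/2 ≤ Pev
  nlinarith [hfinal, hμ₁1, sq_nonneg (μ₁ - 1)]
end

section
/- Let R̂_t ~ Geometric((t−d)/t), independent, for t = 2d,...,n. Then for any δ ∈ (0,1), with probability at least 1 − δ, Σ_{t=2d}^n R̂_t = O(n + log(n/d)·log(1/δ)); concretely, with probability ≥ 1−δ the sum is at most 8·log(n/d)·log(1/δ) + 12n. -/
open MeasureTheory ProbabilityTheory

open MeasureTheory ProbabilityTheory Real ENNReal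

-- per-term lemma: integrability and mgf bound for shifted geometric
lemma geom_key {Ω : Type} [MeasurableSpace Ω] {μ : Measure Ω} [IsProbabilityMeasure μ]
    {X : Ω → ℕ} (hX : Measurable X) {q : ℝ} (hq0 : 0 ≤ q) (hq : q ≤ 1/2)
    (h : ∀ k : ℕ, μ {ω | X ω = k + 1} = ENNReal.ofReal (q ^ k * (1 - q))) :
    Integrable (fun ω => Real.exp (Real.log (11/10) * (X ω : ℝ))) μ ∧
      mgf (fun ω => (X ω : ℝ)) μ (Real.log (11/10)) ≤ 22/9 := by
  set c : ℝ := 11/10 with hc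
  have hc1 : (1:ℝ) < c := by norm_num
  have hc0 : (0:ℝ) ≤ c := by norm_num
  have hexp : Real.exp (Real.log c) = c := Real.exp_log (by norm_num)
  -- rewrite exp(λ k) = c ^ k
  have hpow : ∀ k : ℕ, Real.exp (Real.log c * (k:ℝ)) = c ^ k := by
    intro k
    rw [mul_comm, Real.exp_nat_mul, hexp]
  set ν : Measure ℕ := μ.map X with hν
  haveI : IsProbabilityMeasure ν := Measure.isProbabilityMeasure_map hX.aemeasurable
  have hνk : ∀ k : ℕ, ν {k + 1} = ENNReal.ofReal (q ^ k * (1 - q)) := by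
    intro k
    rw [hν, Measure.map_apply hX (measurableSet_singleton _)]
    exact h k
  have hq1 : ENNReal.ofReal q < 1 := by
    rw [← ENNReal.ofReal_one]
    exact ENNReal.ofReal_lt_ofReal_iff_of_nonneg hq0 |>.mpr (by linarith)
  -- sum of the geometric weights is 1
  have hsum1 : ∑' k : ℕ, ν {k + 1} = 1 := by
    simp_rw [hνk]
    have : ∀ k : ℕ, ENNReal.ofReal (q ^ k * (1 - q))
        = (ENNReal.ofReal q) ^ k * ENNReal.ofReal (1 - q) := by
      intro k
      rw [ENNReal.ofReal_mul (by positivity), ENNReal.ofReal_pow hq0]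
    simp_rw [this]
    rw [ENNReal.tsum_mul_right, ENNReal.tsum_geometric]
    have h1q : (1 : ℝ≥0∞) - ENNReal.ofReal q = ENNReal.ofReal (1 - q) := by
      rw [ENNReal.ofReal_sub _ hq0, ENNReal.ofReal_one]
    rw [h1q, ENNReal.inv_mul_cancel]
    · simp [ENNReal.ofReal_pos]; linarith
    · exact ENNReal.ofReal_ne_top
  have hν0 : ν {0} = 0 := by
    have huniv : ∑' k : ℕ, ν {k} = 1 := by
      have h1 : ∫⁻ _k : ℕ, (1:ℝ≥0∞) ∂ν = 1 := by simp
      rw [lintegral_countable'] at h1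
      simpa using h1
    have hsplit : ∑' k : ℕ, ν {k} = ν {0} + ∑' k : ℕ, ν {k + 1} := tsum_eq_zero_add'
      (by exact ENNReal.summable)
    rw [huniv, hsum1] at hsplit
    have h2 : (1 : ℝ≥0∞) + ν {0} = 1 + 0 := by rw [add_zero, add_comm]; exact hsplit.symm
    exact (ENNReal.add_right_inj ENNReal.one_ne_top).mp h2
  -- compute the lintegral of c ^ X
  have hlin : ∫⁻ ω, ENNReal.ofReal (Real.exp (Real.log c * (X ω : ℝ))) ∂μ
      ≤ ENNReal.ofReal (22/9) := by
    have hmap : ∫⁻ ω, ENNReal.ofReal (Real.exp (Real.log c * (X ω : ℝ))) ∂μ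
        = ∫⁻ k, ENNReal.ofReal (c ^ k) ∂ν := by
      rw [hν, lintegral_map (by measurability) hX]
      congr 1; funext ω; rw [hpow]
    rw [hmap, lintegral_countable']
    rw [tsum_eq_zero_add' (by exact ENNReal.summable), hν0, mul_zero, zero_add]
    have hterm : ∀ k : ℕ, ENNReal.ofReal (c ^ (k+1)) * ν {k + 1}
        = ENNReal.ofReal (c * (1 - q)) * (ENNReal.ofReal (c * q)) ^ k := by
      intro k
      rw [hνk, ← ENNReal.ofReal_mul (pow_nonneg hc0 _),
        ← ENNReal.ofReal_pow (mul_nonneg hc0 hq0),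
        ← ENNReal.ofReal_mul (mul_nonneg hc0 (by linarith))]
      congr 1; ring
    simp_rw [hterm]
    rw [ENNReal.tsum_mul_left, ENNReal.tsum_geometric]
    have hcq : ENNReal.ofReal (c * q) ≤ ENNReal.ofReal (11/20) := by
      apply ENNReal.ofReal_le_ofReal; rw [hc]; nlinarith
    have hsub : ENNReal.ofReal (9/20) ≤ 1 - ENNReal.ofReal (c * q) := by
      rw [← ENNReal.ofReal_one, ← ENNReal.ofReal_sub _ (by positivity)]
      calc ENNReal.ofReal (9/20) ≤ ENNReal.ofReal (1 - 11/20) := by norm_num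
        _ ≤ ENNReal.ofReal (1 - c * q) := by
            apply ENNReal.ofReal_le_ofReal; rw [hc]; nlinarith
    calc ENNReal.ofReal (c * (1 - q)) * (1 - ENNReal.ofReal (c * q))⁻¹
        ≤ ENNReal.ofReal c * (ENNReal.ofReal (9/20))⁻¹ := by
          apply mul_le_mul'
          · apply ENNReal.ofReal_le_ofReal; nlinarith
          · exact ENNReal.inv_le_inv' hsub
      _ = ENNReal.ofReal (22/9) := by
          rw [← ENNReal.ofReal_inv_of_pos (by norm_num),
            ← ENNReal.ofReal_mul (by norm_num)]
          norm_num
  have hmeas' : Measurable (fun ω => Real.exp (Real.log c * (X ω : ℝ))) :=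
    (measurable_const.mul ((measurable_from_top : Measurable (Nat.cast : ℕ → ℝ)).comp hX)).exp
  have hint : Integrable (fun ω => Real.exp (Real.log c * (X ω : ℝ))) μ := by
    refine ⟨hmeas'.aestronglyMeasurable, ?_⟩
    rw [hasFiniteIntegral_iff_ofReal (Filter.Eventually.of_forall fun ω => (Real.exp_pos _).le)]
    exact lt_of_le_of_lt hlin ENNReal.ofReal_lt_top
  refine ⟨hint, ?_⟩
  rw [mgf, integral_eq_lintegral_of_nonneg_ae
    (Filter.Eventually.of_forall fun ω => (Real.exp_pos _).le) hmeas'.aestronglyMeasurable]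
  exact ENNReal.toReal_le_of_le_ofReal (by norm_num) hlin

/-- High-probability bound on the total number of rejection-sampling trials: for
independent `R̂_t ~ Geometric((t−d)/t)` on `{1,2,...}`, `t = 2d,...,n`, with `n/d = 2^J`,
and any `δ ∈ (0,1)`, with probability at least `1 − δ`,
`∑_{t=2d}^n R̂_t ≤ 8·log₂(n/d)·log₂(1/δ) + 12n = O(n + log(n/d)·log(1/δ))`. -/
theorem rejection_trials_high_probability_bound
    (d n J : ℕ) (hd : 1 ≤ d) (hJ : 1 ≤ J) (hn : n = d * 2 ^ J)
    (δ : ℝ) (hδ0 : 0 < δ) (hδ1 : δ < 1)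
    {Ω : Type} [MeasurableSpace Ω] (μ : Measure Ω) [IsProbabilityMeasure μ]
    (R : ℕ → Ω → ℕ) (hmeas : ∀ t, Measurable (R t))
    (hgeom : ∀ t ∈ Finset.Icc (2 * d) n, ∀ k : ℕ,
      μ {ω | R t ω = k + 1} = ENNReal.ofReal (((d : ℝ) / t) ^ k * (((t : ℝ) - d) / t)))
    (hindep : iIndepFun R μ) :
    ENNReal.ofReal (1 - δ) ≤
      μ {ω | ∑ t ∈ Finset.Icc (2 * d) n, (R t ω : ℝ)
          ≤ 8 * Real.logb 2 ((n : ℝ) / d) * Real.logb 2 (1 / δ) + 12 * n} := by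
  classical
  set c : ℝ := 11/10 with hc
  set lam : ℝ := Real.log c with hlamdef
  have hexp : Real.exp lam = c := Real.exp_log (by norm_num)
  have hlam : 0 < lam := Real.log_pos (by norm_num)
  set Y : ℕ → Ω → ℝ := fun t ω => (R t ω : ℝ) with hY
  have hYmeas : ∀ t, Measurable (Y t) := fun t =>
    (measurable_from_top : Measurable (Nat.cast : ℕ → ℝ)).comp (hmeas t)
  have hYindep : iIndepFun Y μ :=
    hindep.comp (fun _ => (Nat.cast : ℕ → ℝ)) (fun _ => measurable_from_top)
  set s : Finset ℕ := Finset.Icc (2 * d) n with hs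
  -- per-term facts
  have hkey : ∀ t ∈ s, Integrable (fun ω => Real.exp (lam * Y t ω)) μ ∧
      mgf (Y t) μ lam ≤ 22/9 := by
    intro t ht
    rw [hs, Finset.mem_Icc] at ht
    have htpos : (0:ℝ) < t := by
      have : 2 * d ≤ t := ht.1
      have : 1 ≤ t := by omega
      exact_mod_cast Nat.lt_of_lt_of_le Nat.zero_lt_one this
    have hq0 : (0:ℝ) ≤ (d:ℝ)/t := by positivity
    have hqhalf : (d:ℝ)/t ≤ 1/2 := by
      rw [div_le_div_iff₀ htpos (by norm_num)]
      have : (2*d : ℕ) ≤ t := ht.1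
      have : ((2*d : ℕ):ℝ) ≤ (t:ℝ) := by exact_mod_cast this
      push_cast at this
      linarith
    have hform : ∀ k : ℕ, μ {ω | R t ω = k + 1}
        = ENNReal.ofReal (((d:ℝ)/t) ^ k * (1 - (d:ℝ)/t)) := by
      intro k
      rw [hgeom t (by rw [Finset.mem_Icc]; exact ht) k]
      congr 2
      field_simp
    exact geom_key (hmeas t) hq0 hqhalf hform
  set X : Ω → ℝ := ∑ t ∈ s, Y t with hX
  have hintX : Integrable (fun ω => Real.exp (lam * X ω)) μ :=
    hYindep.integrable_exp_mul_sum hYmeas (fun t ht => (hkey t ht).1)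
  -- the bound B
  have hd0 : (0:ℝ) < d := by exact_mod_cast hd
  have hlogbnd : Real.logb 2 ((n:ℝ)/d) = J := by
    have h2 : (n:ℝ)/d = (2:ℝ) ^ (J:ℝ) := by
      rw [hn, Real.rpow_natCast]; push_cast
      rw [mul_comm, mul_div_assoc, div_self (ne_of_gt hd0), mul_one]
    rw [h2, Real.logb_rpow (by norm_num) (by norm_num)]
  set L : ℝ := Real.logb 2 (1/δ) with hL
  have hL0 : 0 < L := Real.logb_pos (by norm_num) (by rw [lt_div_iff₀ hδ0]; linarith)
  set B : ℝ := 8 * (J:ℝ) * L + 12 * n with hB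
  -- Chernoff
  have hchern : (μ {ω | B ≤ X ω}).toReal ≤ Real.exp (-lam * B) * ∏ t ∈ s, mgf (Y t) μ lam := by
    have h1 := measure_ge_le_exp_mul_mgf (X := X) (μ := μ) B hlam.le hintX
    rwa [hX, hYindep.mgf_sum hYmeas s] at h1
  -- cardinality bound
  have hmn : s.card ≤ n := by
    rw [hs, Nat.card_Icc]
    have h2d : 2 * d ≤ n := by
      rw [hn]
      calc 2 * d = d * 2 ^ 1 := by ring
        _ ≤ d * 2 ^ J := Nat.mul_le_mul_left d (Nat.pow_le_pow_right (by norm_num) hJ)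
    omega
  -- product bound
  have hprod : ∏ t ∈ s, mgf (Y t) μ lam ≤ (22/9 : ℝ) ^ s.card := by
    rw [← Finset.prod_const]
    exact Finset.prod_le_prod (fun t _ => mgf_nonneg) (fun t ht => (hkey t ht).2)
  -- numeric part 1 : exp(-lam * 12n) * (22/9)^card ≤ 1
  have hcpow : ∀ k : ℕ, Real.exp (lam * k) = c ^ k := fun k => by
    rw [mul_comm, Real.exp_nat_mul, hexp]
  have hnum1 : (22/9 : ℝ) ^ s.card ≤ Real.exp (lam * (12 * (n:ℝ))) := by
    have e1 : Real.exp (lam * (12 * (n:ℝ))) = c ^ (12 * n) := by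
      rw [show lam * (12 * (n:ℝ)) = lam * ((12 * n : ℕ) : ℝ) by push_cast; ring, hcpow]
    rw [e1]
    calc (22/9 : ℝ) ^ s.card ≤ (c ^ 12) ^ s.card := by
          apply pow_le_pow_left₀ (by norm_num)
          rw [hc]; norm_num
      _ = c ^ (12 * s.card) := by rw [← pow_mul]
      _ ≤ c ^ (12 * n) := by
          apply pow_le_pow_right₀ (by rw [hc]; norm_num)
          omega
  -- numeric part 2 : exp(-lam * 8 J L) ≤ δ
  have hnum2 : Real.exp (-(lam * (8 * (J:ℝ) * L))) ≤ δ := by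
    have hJ1 : (1:ℝ) ≤ (J:ℝ) := by exact_mod_cast hJ
    have step1 : Real.exp (-(lam * (8 * (J:ℝ) * L))) ≤ Real.exp (-(8 * lam * L)) := by
      apply Real.exp_le_exp.mpr
      have hx : (1:ℝ) * (lam * L) ≤ (J:ℝ) * (lam * L) :=
        mul_le_mul_of_nonneg_right hJ1 (mul_pos hlam hL0).le
      nlinarith [hx]
    refine step1.trans ?_
    have hlog2 : Real.log 2 ≤ 8 * lam := by
      have : Real.log 2 ≤ Real.log (c ^ 8) := by
        apply Real.log_le_log (by norm_num)
        rw [hc]; norm_num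
      rw [Real.log_pow] at this
      rw [hlamdef]
      push_cast at this
      linarith

    have hlog2pos : (0:ℝ) < Real.log 2 := Real.log_pos (by norm_num)
    set a : ℝ := 8 * lam / Real.log 2 with ha
    have ha1 : 1 ≤ a := by rw [ha, le_div_iff₀ hlog2pos]; linarith
    have hLval : L = -Real.log δ / Real.log 2 := by
      rw [hL, Real.logb, Real.log_div one_ne_zero (ne_of_gt hδ0), Real.log_one]
      ring
    have hexpa : Real.exp (-(8 * lam * L)) = δ ^ a := by
      rw [Real.rpow_def_of_pos hδ0, hLval, ha]
      congr 1
      field_simp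
    rw [hexpa]
    calc δ ^ a ≤ δ ^ (1:ℝ) := Real.rpow_le_rpow_of_exponent_ge hδ0 hδ1.le ha1
      _ = δ := Real.rpow_one δ
  -- combine
  have hfinal : (μ {ω | B ≤ X ω}).toReal ≤ δ := by
    refine hchern.trans ?_
    calc Real.exp (-lam * B) * ∏ t ∈ s, mgf (Y t) μ lam
        ≤ Real.exp (-lam * B) * (22/9 : ℝ) ^ s.card :=
          mul_le_mul_of_nonneg_left hprod (Real.exp_nonneg _)
      _ ≤ Real.exp (-lam * B) * Real.exp (lam * (12 * (n:ℝ))) :=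
          mul_le_mul_of_nonneg_left hnum1 (Real.exp_nonneg _)
      _ = Real.exp (-(lam * (8 * (J:ℝ) * L))) := by
          rw [← Real.exp_add, hB]; ring_nf
      _ ≤ δ := hnum2
  -- wrap up
  set S : Set Ω := {ω | ∑ t ∈ Finset.Icc (2 * d) n, (R t ω : ℝ)
      ≤ 8 * Real.logb 2 ((n : ℝ) / d) * Real.logb 2 (1 / δ) + 12 * n} with hS
  have hSmeas : MeasurableSet S := by
    apply measurableSet_le
    · exact Finset.measurable_sum _ (fun t _ => hYmeas t)
    · exact measurable_const
  have hsub : Sᶜ ⊆ {ω | B ≤ X ω} := by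
    intro ω hω
    simp only [hS, Set.mem_compl_iff, Set.mem_setOf_eq, not_le] at hω
    rw [hlogbnd, ← hL, ← hs] at hω
    have hXω : X ω = ∑ t ∈ s, (R t ω : ℝ) := by
      rw [hX, Finset.sum_apply]
    simp only [Set.mem_setOf_eq, hXω, hB]
    linarith
  have hcompl : μ Sᶜ ≤ ENNReal.ofReal δ := by
    refine (measure_mono hsub).trans ?_
    rw [← ENNReal.ofReal_toReal (measure_ne_top μ _)]
    exact ENNReal.ofReal_le_ofReal hfinal
  have hμS : μ S = 1 - μ Sᶜ := by
    rw [measure_compl hSmeas (measure_ne_top μ S), measure_univ]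
    exact (ENNReal.sub_sub_cancel ENNReal.one_ne_top prob_le_one).symm
  rw [hμS]
  calc ENNReal.ofReal (1 - δ) = 1 - ENNReal.ofReal δ := by
        rw [ENNReal.ofReal_sub _ hδ0.le, ENNReal.ofReal_one]
    _ ≤ 1 - μ Sᶜ := tsub_le_tsub_left hcompl 1
end
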